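/- Let $\rho, \hat{\rho}, \kappa$ be density matrices on $\mathbb{C}^{d}$ with $\mathrm{Tr}(|\hat{\rho} - \rho|) \le 2\delta$. Then the fidelities $F(\rho, \kappa) = \|\sqrt{\rho}\sqrt{\kappa}\|_1$ and $F(\hat{\rho}, \kappa) = \|\sqrt{\hat{\rho}}\sqrt{\kappa}\|_1$ satisfy $|F(\hat{\rho}, \kappa) - F(\rho, \kappa)| \le \sqrt{2\delta}$, i.e., $F(\hat{\rho},\kappa) - \sqrt{2\delta} \le F(\rho,\kappa) \le F(\hat{\rho},\kappa) + \sqrt{2\delta}$. -/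

import Mathlib

open Matrix ComplexOrder

/-- Port: `Matrix.PosSemidef.sqrt` as it was defined in Mathlib (Dec 2024). -/
noncomputable def Matrix.PosSemidef.sqrt {n 𝕜 : Type*} [Fintype n] [DecidableEq n] [RCLike 𝕜]
    {A : Matrix n n 𝕜} (hA : A.PosSemidef) : Matrix n n 𝕜 :=
  hA.1.eigenvectorUnitary.1 * diagonal ((↑) ∘ (fun x : ℝ => Real.sqrt x) ∘ hA.1.eigenvalues) *
    (star hA.1.eigenvectorUnitary : Matrix n n 𝕜)

/-- The trace norm `‖X‖₁ = Tr √(Xᴴ X)` (a real number). -/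
noncomputable def traceNorm {d : ℕ} (X : Matrix (Fin d) (Fin d) ℂ) : ℝ :=
  ((Matrix.posSemidef_conjTranspose_mul_self X).sqrt.trace).re

namespace Matrix.PosSemidef

lemma sqrt_mul_self {n 𝕜 : Type*} [Fintype n] [DecidableEq n] [RCLike 𝕜]
    {A : Matrix n n 𝕜} (hA : A.PosSemidef) : hA.sqrt * hA.sqrt = A := by
  have hU : (star hA.1.eigenvectorUnitary : Matrix n n 𝕜) * hA.1.eigenvectorUnitary.1 = 1 :=
    Unitary.coe_star_mul_self _
  conv_rhs => rw [hA.1.spectral_theorem, Unitary.conjStarAlgAut_apply]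
  simp only [Matrix.PosSemidef.sqrt]
  calc _ = hA.1.eigenvectorUnitary.1 *
        (diagonal ((↑) ∘ (fun x : ℝ => Real.sqrt x) ∘ hA.1.eigenvalues) *
        ((star hA.1.eigenvectorUnitary : Matrix n n 𝕜) * hA.1.eigenvectorUnitary.1) *
        diagonal ((↑) ∘ (fun x : ℝ => Real.sqrt x) ∘ hA.1.eigenvalues)) *
        (star hA.1.eigenvectorUnitary : Matrix n n 𝕜) := by simp only [mul_assoc]
    _ = _ := by
      rw [hU, mul_one, diagonal_mul_diagonal]
      congr 3
      funext i
      simp only [Function.comp_apply]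
      rw [← RCLike.ofReal_mul, Real.mul_self_sqrt (hA.eigenvalues_nonneg i)]

lemma posSemidef_sqrt {n 𝕜 : Type*} [Fintype n] [DecidableEq n] [RCLike 𝕜]
    {A : Matrix n n 𝕜} (hA : A.PosSemidef) : hA.sqrt.PosSemidef := by
  have hd : (diagonal ((↑) ∘ (fun x : ℝ => Real.sqrt x) ∘ hA.1.eigenvalues) :
      Matrix n n 𝕜).PosSemidef :=
    posSemidef_diagonal_iff.mpr fun i => by
      simpa using RCLike.ofReal_nonneg.mpr (Real.sqrt_nonneg (hA.1.eigenvalues i))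
  have h := hd.mul_mul_conjTranspose_same hA.1.eigenvectorUnitary.1
  rw [← Matrix.star_eq_conjTranspose] at h
  exact h

end Matrix.PosSemidef

/-- The fidelity `F(A,B) = ‖√A √B‖₁`. -/
noncomputable def fid {d : ℕ} {A B : Matrix (Fin d) (Fin d) ℂ}
    (hA : A.PosSemidef) (hB : B.PosSemidef) : ℝ :=
  traceNorm (hA.sqrt * hB.sqrt)

namespace FidelityAux

variable {d : ℕ}

/-- A matrix regarded as a Euclidean (Frobenius) vector. -/
def vec (X : Matrix (Fin d) (Fin d) ℂ) : EuclideanSpace ℂ (Fin d × Fin d) :=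
  WithLp.toLp 2 (fun p : Fin d × Fin d => X p.1 p.2)

/-- Frobenius norm. -/
noncomputable def frob (X : Matrix (Fin d) (Fin d) ℂ) : ℝ := ‖vec X‖

lemma inner_vec (X Y : Matrix (Fin d) (Fin d) ℂ) :
    (inner ℂ (vec X) (vec Y) : ℂ) = (Xᴴ * Y).trace := by
  simp only [PiLp.inner_apply, RCLike.inner_apply, vec, trace, diag_apply, mul_apply,
    conjTranspose_apply, Fintype.sum_prod_type]
  rw [Finset.sum_comm]
  simp [RCLike.star_def, mul_comm]

lemma frob_nonneg (X : Matrix (Fin d) (Fin d) ℂ) : 0 ≤ frob X := norm_nonneg _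

lemma frob_sq (X : Matrix (Fin d) (Fin d) ℂ) : frob X ^ 2 = ((Xᴴ * X).trace).re := by
  rw [← inner_vec, ← RCLike.re_to_complex]
  exact (inner_self_eq_norm_sq (𝕜 := ℂ) (vec X)).symm

lemma cauchy_schwarz_re (X Y : Matrix (Fin d) (Fin d) ℂ) :
    (((Xᴴ * Y).trace).re : ℝ) ≤ frob X * frob Y := by
  rw [← inner_vec]
  calc (inner ℂ (vec X) (vec Y) : ℂ).re ≤ ‖(inner ℂ (vec X) (vec Y) : ℂ)‖ := Complex.re_le_norm _
    _ ≤ frob X * frob Y := norm_inner_le_norm _ _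

lemma trace_re_nonneg {A : Matrix (Fin d) (Fin d) ℂ} (hA : A.PosSemidef) :
    0 ≤ (A.trace).re := by
  have h : ∀ i, 0 ≤ A i i := fun i => by
    have h2 := hA.dotProduct_mulVec_nonneg (Pi.single i 1)
    simpa [dotProduct, Pi.single_apply, mulVec] using h2
  have : (0:ℝ) ≤ ∑ i, (A i i).re :=
    Finset.sum_nonneg fun i _ => (Complex.nonneg_iff.mp (h i)).1
  simpa [trace, Complex.re_sum] using this

lemma trace_mul_re_nonneg {A B : Matrix (Fin d) (Fin d) ℂ}
    (hA : A.PosSemidef) (hB : B.PosSemidef) : 0 ≤ ((A * B).trace).re := by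
  have h1 : A * B = hA.sqrt * (hA.sqrt * B) := by
    rw [← mul_assoc, hA.sqrt_mul_self]
  have h2 : ((A * B).trace) = ((hA.sqrt * B * hA.sqrt).trace) := by
    rw [h1, trace_mul_comm hA.sqrt (hA.sqrt * B)]
  have h3 := hB.mul_mul_conjTranspose_same hA.sqrt
  rw [hA.posSemidef_sqrt.1.eq] at h3
  rw [h2]
  exact trace_re_nonneg h3

/-! ### Polar decomposition -/

/-- The matrix whose columns are the vectors of an orthonormal basis. -/
noncomputable def colMat (c : OrthonormalBasis (Fin d) ℂ (EuclideanSpace ℂ (Fin d))) :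
    Matrix (Fin d) (Fin d) ℂ :=
  Matrix.of fun x i => c i x

lemma colMat_conjTranspose_mul (c : OrthonormalBasis (Fin d) ℂ (EuclideanSpace ℂ (Fin d))) :
    (colMat c)ᴴ * colMat c = 1 := by
  ext i j
  have := orthonormal_iff_ite.mp c.orthonormal i j
  simp only [PiLp.inner_apply, RCLike.inner_apply, RCLike.star_def] at this
  simp only [mul_apply, conjTranspose_apply, colMat, Matrix.of_apply, one_apply]
  simpa [mul_comm] using this

lemma colMat_mul_conjTranspose (c : OrthonormalBasis (Fin d) ℂ (EuclideanSpace ℂ (Fin d))) :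
    colMat c * (colMat c)ᴴ = 1 :=
  mul_eq_one_comm.mpr (colMat_conjTranspose_mul c)

lemma colMat_mulVec_single (c : OrthonormalBasis (Fin d) ℂ (EuclideanSpace ℂ (Fin d))) (i : Fin d) :
    colMat c *ᵥ Pi.single i 1 = (c i : Fin d → ℂ) := by
  ext x
  simp [colMat, mulVec, dotProduct, Pi.single_apply]

lemma colMat_conjTranspose_mulVec (c : OrthonormalBasis (Fin d) ℂ (EuclideanSpace ℂ (Fin d)))
    (i : Fin d) : (colMat c)ᴴ *ᵥ (c i : Fin d → ℂ) = Pi.single i 1 := by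
  ext j
  have := orthonormal_iff_ite.mp c.orthonormal j i
  simp only [PiLp.inner_apply, RCLike.inner_apply, RCLike.star_def] at this
  simp only [mulVec, dotProduct, conjTranspose_apply, colMat, Matrix.of_apply,
    Pi.single_apply]
  simpa [mul_comm] using this

lemma inner_mulVec_left (X : Matrix (Fin d) (Fin d) ℂ) (x y : Fin d → ℂ) :
    (inner ℂ (WithLp.toLp 2 (X *ᵥ x) : EuclideanSpace ℂ (Fin d)) (WithLp.toLp 2 y) : ℂ)
      = inner ℂ (WithLp.toLp 2 x : EuclideanSpace ℂ (Fin d)) (WithLp.toLp 2 (Xᴴ *ᵥ y)) := by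
  simp only [PiLp.inner_apply, RCLike.inner_apply, RCLike.star_def, mulVec, dotProduct,
    conjTranspose_apply, map_sum, _root_.map_mul, Complex.conj_conj, Finset.sum_mul,
    Finset.mul_sum]
  rw [Finset.sum_comm]
  apply Finset.sum_congr rfl; intro i _
  apply Finset.sum_congr rfl; intro j _
  ring

lemma mul_colMat_apply (M : Matrix (Fin d) (Fin d) ℂ)
    (c : OrthonormalBasis (Fin d) ℂ (EuclideanSpace ℂ (Fin d))) (x i : Fin d) :
    (M * colMat c) x i = (M *ᵥ (c i : Fin d → ℂ)) x := by
  simp [mul_apply, mulVec, dotProduct, colMat]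

lemma real_smul_vec (r : ℝ) (v : Fin d → ℂ) : r • v = (r : ℂ) • v := by
  funext i
  simp [Complex.real_smul]

/-- Polar decomposition of a square complex matrix. -/
theorem exists_polar (X : Matrix (Fin d) (Fin d) ℂ) :
    ∃ W : Matrix (Fin d) (Fin d) ℂ, Wᴴ * W = 1 ∧ W * Wᴴ = 1 ∧
      X = W * (Matrix.posSemidef_conjTranspose_mul_self X).sqrt := by
  set hP := Matrix.posSemidef_conjTranspose_mul_self X with hPdef2
  set P := hP.sqrt with hPdef
  have hPP : P * P = Xᴴ * X := hP.sqrt_mul_self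
  have hPsd : P.PosSemidef := hP.posSemidef_sqrt
  have hPh : P.IsHermitian := hPsd.1
  set b := hPh.eigenvectorBasis with hbdef
  set ev := hPh.eigenvalues with hevdef
  have hbe : ∀ j, P *ᵥ (b j : Fin d → ℂ) = ev j • (b j : Fin d → ℂ) :=
    fun j => hPh.mulVec_eigenvectorBasis j
  have hbo := orthonormal_iff_ite.mp b.orthonormal
  -- Gram computation
  have hXX : ∀ i j, (inner ℂ (WithLp.toLp 2 (X *ᵥ (b i : Fin d → ℂ)) : EuclideanSpace ℂ (Fin d))
      (WithLp.toLp 2 (X *ᵥ (b j : Fin d → ℂ))) : ℂ)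
      = ((ev j : ℂ) ^ 2) * (if i = j then 1 else 0) := by
    intro i j
    have h1 : (WithLp.toLp 2 (Xᴴ *ᵥ (X *ᵥ (b j : Fin d → ℂ))) : EuclideanSpace ℂ (Fin d))
        = ((ev j : ℂ) ^ 2) • b j := by
      suffices Xᴴ *ᵥ (X *ᵥ (b j : Fin d → ℂ)) = ((ev j : ℂ) ^ 2) • (b j : Fin d → ℂ) by
        rw [this]; rfl
      rw [mulVec_mulVec, ← hPP, ← mulVec_mulVec, hbe j, real_smul_vec, mulVec_smul, hbe j,
        real_smul_vec, smul_smul]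
      rw [pow_two]
    rw [inner_mulVec_left, WithLp.toLp_ofLp, h1, inner_smul_right, hbo i j]
  set w : Fin d → EuclideanSpace ℂ (Fin d) :=
    fun i => ((ev i : ℂ))⁻¹ • (WithLp.toLp 2 (X *ᵥ (b i : Fin d → ℂ)) : EuclideanSpace ℂ (Fin d))
    with hwdef
  set s : Set (Fin d) := {i | ev i ≠ 0} with hsdef
  have horm : Orthonormal ℂ (s.restrict w) := by
    rw [orthonormal_iff_ite]
    rintro ⟨i, hi⟩ ⟨j, hj⟩
    have hi' : ev i ≠ 0 := hi
    have hj' : ev j ≠ 0 := hj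
    simp only [Set.restrict_apply, hwdef, Set.restrict]
    rw [inner_smul_left, inner_smul_right, hXX i j]
    rw [map_inv₀, Complex.conj_ofReal]
    by_cases h : i = j
    · subst h
      rw [if_pos rfl, if_pos rfl, mul_one]
      field_simp
    · have hne : (⟨i, hi⟩ : s) ≠ ⟨j, hj⟩ := by simp [Subtype.mk.injEq, h]
      rw [if_neg h, if_neg hne, mul_zero, mul_zero, mul_zero]
  obtain ⟨c, hc⟩ := horm.exists_orthonormalBasis_extension_of_card_eq
    (finrank_euclideanSpace (𝕜 := ℂ) (ι := Fin d)) 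
  set W := colMat c * (colMat b)ᴴ with hWdef
  have hW1 : Wᴴ * W = 1 := by
    rw [hWdef, conjTranspose_mul, conjTranspose_conjTranspose, mul_assoc,
      ← mul_assoc (colMat c)ᴴ (colMat c) (colMat b)ᴴ, colMat_conjTranspose_mul, one_mul,
      colMat_mul_conjTranspose]
  have hW2 : W * Wᴴ = 1 := mul_eq_one_comm.mpr hW1
  refine ⟨W, hW1, hW2, ?_⟩
  have hWb : ∀ i, W *ᵥ (b i : Fin d → ℂ) = (c i : Fin d → ℂ) := by
    intro i
    rw [hWdef, ← mulVec_mulVec, colMat_conjTranspose_mulVec, colMat_mulVec_single]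
  have hagree : ∀ i, (W * P) *ᵥ (b i : Fin d → ℂ) = X *ᵥ (b i : Fin d → ℂ) := by
    intro i
    rw [← mulVec_mulVec, hbe i, real_smul_vec, mulVec_smul, hWb i]
    by_cases hi : ev i = 0
    · have hzero : (WithLp.toLp 2 (X *ᵥ (b i : Fin d → ℂ)) : EuclideanSpace ℂ (Fin d)) = 0 := by
        rw [← inner_self_eq_zero (𝕜 := ℂ)]
        rw [hXX i i]
        simp [hi]
      have hzero' : X *ᵥ (b i : Fin d → ℂ) = 0 := by simpa using congrArg WithLp.ofLp hzero
      rw [hi, hzero']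
      simp
    · have hci : c i = w i := hc i hi
      rw [hci, hwdef]
      show (ev i : ℂ) • (((ev i : ℂ))⁻¹ • (X *ᵥ (b i : Fin d → ℂ))) = X *ᵥ (b i : Fin d → ℂ)
      rw [smul_smul, mul_inv_cancel₀ (Complex.ofReal_ne_zero.mpr hi), one_smul]
  have hcol : (W * P) * colMat b = X * colMat b := by
    ext x i
    rw [mul_colMat_apply, mul_colMat_apply, hagree i]
  calc X = X * (colMat b * (colMat b)ᴴ) := by rw [colMat_mul_conjTranspose, mul_one]
    _ = (X * colMat b) * (colMat b)ᴴ := by rw [mul_assoc]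
    _ = ((W * P) * colMat b) * (colMat b)ᴴ := by rw [hcol]
    _ = (W * P) * (colMat b * (colMat b)ᴴ) := by rw [mul_assoc]
    _ = W * P := by rw [colMat_mul_conjTranspose, mul_one]

/-! ### Trace norm duality -/

lemma frob_eq_sqrt (X : Matrix (Fin d) (Fin d) ℂ) :
    frob X = Real.sqrt (((Xᴴ * X).trace).re) := by
  rw [← frob_sq, Real.sqrt_sq (frob_nonneg X)]

lemma trace_unitary_mul_psd_re_le {P M : Matrix (Fin d) (Fin d) ℂ}
    (hP : P.PosSemidef) (hM : Mᴴ * M = 1) : ((M * P).trace).re ≤ (P.trace).re := by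
  set S := hP.sqrt with hSdef
  have hSS : S * S = P := hP.sqrt_mul_self
  have hSh : Sᴴ = S := hP.posSemidef_sqrt.1.eq
  have h1 : (M * P).trace = (Sᴴ * (M * S)).trace := by
    rw [hSh, ← hSS, ← mul_assoc, trace_mul_comm (M * S) S]
  have h2 : frob (M * S) = Real.sqrt ((P.trace).re) := by
    rw [frob_eq_sqrt]
    congr 2
    rw [conjTranspose_mul, mul_assoc, ← mul_assoc Mᴴ M S, hM, one_mul, hSh, hSS]
  have h3 : frob S = Real.sqrt ((P.trace).re) := by
    rw [frob_eq_sqrt]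
    congr 2
    rw [hSh, hSS]
  calc ((M * P).trace).re = ((Sᴴ * (M * S)).trace).re := by rw [h1]
    _ ≤ frob S * frob (M * S) := cauchy_schwarz_re _ _
    _ = (P.trace).re := by
        rw [h2, h3, Real.mul_self_sqrt (trace_re_nonneg hP)]

lemma trace_unitary_mul_le (X W : Matrix (Fin d) (Fin d) ℂ) (hW : Wᴴ * W = 1) :
    ((W * X).trace).re ≤ traceNorm X := by
  obtain ⟨V, hV1, hV2, hX⟩ := exists_polar X
  have hP := (Matrix.posSemidef_conjTranspose_mul_self X).posSemidef_sqrt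
  have hWV : (W * V)ᴴ * (W * V) = 1 := by
    rw [conjTranspose_mul, mul_assoc, ← mul_assoc Wᴴ W V, hW, one_mul, hV1]
  have h := trace_unitary_mul_psd_re_le hP hWV
  calc ((W * X).trace).re = ((W * V * (Matrix.posSemidef_conjTranspose_mul_self X).sqrt).trace).re := by
        conv_lhs => rw [hX]
        rw [mul_assoc]
    _ ≤ (((Matrix.posSemidef_conjTranspose_mul_self X).sqrt.trace)).re := h
    _ = traceNorm X := rfl

lemma exists_unitary_trace_eq (X : Matrix (Fin d) (Fin d) ℂ) :
    ∃ W : Matrix (Fin d) (Fin d) ℂ, Wᴴ * W = 1 ∧ W * Wᴴ = 1 ∧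
      ((W * X).trace).re = traceNorm X := by
  obtain ⟨V, hV1, hV2, hX⟩ := exists_polar X
  refine ⟨Vᴴ, by rwa [conjTranspose_conjTranspose], by rwa [conjTranspose_conjTranspose], ?_⟩
  conv_lhs => rw [hX]
  rw [← mul_assoc, hV1, one_mul]
  rfl

lemma frob_sub_comm (X Y : Matrix (Fin d) (Fin d) ℂ) : frob (X - Y) = frob (Y - X) := by
  have h : vec (X - Y) = -vec (Y - X) := by
    ext p
    simp [vec, Matrix.sub_apply]
  rw [frob, frob, h, norm_neg]

/-! ### Lipschitz bound for fidelity -/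

lemma fid_sub_le {A B C : Matrix (Fin d) (Fin d) ℂ}
    (hA : A.PosSemidef) (hB : B.PosSemidef) (hC : C.PosSemidef) (hCtr : C.trace = 1) :
    fid hA hC - fid hB hC ≤ frob (hA.sqrt - hB.sqrt) := by
  set SA := hA.sqrt with hSA
  set SB := hB.sqrt with hSB
  set SC := hC.sqrt with hSCdef
  have hSCh : SCᴴ = SC := hC.posSemidef_sqrt.1.eq
  obtain ⟨W, hW1, hW2, hWeq⟩ := exists_unitary_trace_eq (SA * SC)
  have hsplit : (W * (SA * SC)).trace
      = (W * (SB * SC)).trace + (W * ((SA - SB) * SC)).trace := by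
    rw [← trace_add, ← mul_add, ← add_mul, add_sub_cancel]
  have h1 : ((W * (SB * SC)).trace).re ≤ fid hB hC := trace_unitary_mul_le _ _ hW1
  have hfr : frob (Wᴴ * SC) = 1 := by
    rw [frob_eq_sqrt]
    have : (Wᴴ * SC)ᴴ * (Wᴴ * SC) = C := by
      rw [conjTranspose_mul, conjTranspose_conjTranspose, hSCh, mul_assoc,
        ← mul_assoc W Wᴴ SC, hW2, one_mul, hC.sqrt_mul_self]
    rw [this, hCtr]
    simp
  have h2 : ((W * ((SA - SB) * SC)).trace).re ≤ frob (SA - SB) := by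
    have he : (W * ((SA - SB) * SC)).trace = ((Wᴴ * SC)ᴴ * (SA - SB)).trace := by
      rw [conjTranspose_mul, conjTranspose_conjTranspose, hSCh, ← mul_assoc,
        trace_mul_comm (W * (SA - SB)) SC, ← mul_assoc]
    calc ((W * ((SA - SB) * SC)).trace).re
        = (((Wᴴ * SC)ᴴ * (SA - SB)).trace).re := by rw [he]
      _ ≤ frob (Wᴴ * SC) * frob (SA - SB) := cauchy_schwarz_re _ _
      _ = frob (SA - SB) := by rw [hfr, one_mul]
  have hfidA : fid hA hC = ((W * (SA * SC)).trace).re := hWeq.symm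
  have hre : ((W * (SA * SC)).trace).re
      = ((W * (SB * SC)).trace).re + ((W * ((SA - SB) * SC)).trace).re := by
    rw [hsplit, Complex.add_re]
  rw [hfidA, hre]
  linarith

/-! ### Powers–Størmer -/

theorem powers_stormer {A B : Matrix (Fin d) (Fin d) ℂ}
    (hA : A.PosSemidef) (hB : B.PosSemidef) :
    frob (hA.sqrt - hB.sqrt) ^ 2 ≤ traceNorm (A - B) := by
  set SA := hA.sqrt with hSA
  set SB := hB.sqrt with hSB
  have hs : (SA - SB).IsHermitian := hA.posSemidef_sqrt.1.sub hB.posSemidef_sqrt.1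
  set e := hs.eigenvalues with he
  set U : Matrix (Fin d) (Fin d) ℂ := (hs.eigenvectorUnitary : Matrix (Fin d) (Fin d) ℂ) with hUdef
  have hU1 : star U * U = 1 := mem_unitaryGroup_iff'.mp hs.eigenvectorUnitary.2
  have hU2 : U * star U = 1 := mem_unitaryGroup_iff.mp hs.eigenvectorUnitary.2
  set cnj : (Fin d → ℝ) → Matrix (Fin d) (Fin d) ℂ :=
    fun f => U * diagonal (RCLike.ofReal ∘ f) * star U with hcnj
  have hcnj_mul : ∀ f g, cnj f * cnj g = cnj (fun i => f i * g i) := by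
    intro f g
    simp only [hcnj]
    calc U * diagonal (RCLike.ofReal ∘ f) * star U * (U * diagonal (RCLike.ofReal ∘ g) * star U)
        = U * (diagonal (RCLike.ofReal ∘ f) * ((star U * U) * diagonal (RCLike.ofReal ∘ g))) *
            star U := by simp only [mul_assoc]
      _ = U * (diagonal (RCLike.ofReal ∘ f) * diagonal (RCLike.ofReal ∘ g)) * star U := by
            rw [hU1, one_mul]
      _ = U * diagonal (RCLike.ofReal ∘ fun i => f i * g i) * star U := by
            rw [diagonal_mul_diagonal]
            have : (fun i => (RCLike.ofReal ∘ f : Fin d → ℂ) i * (RCLike.ofReal ∘ g) i)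
                = (RCLike.ofReal ∘ fun i => f i * g i) := by
              funext i; simp
            rw [this]
  have htr_re : ∀ f, ((cnj f).trace).re = ∑ i, f i := by
    intro f
    rw [hcnj]
    rw [trace_mul_comm (U * diagonal (RCLike.ofReal ∘ f)) (star U), ← mul_assoc, hU1, one_mul,
      trace_diagonal]
    simp [Complex.re_sum]
  have hherm : ∀ f, (cnj f)ᴴ = cnj f := by
    intro f
    simp only [hcnj]
    have hd : (diagonal (RCLike.ofReal ∘ f) : Matrix (Fin d) (Fin d) ℂ)ᴴ
        = diagonal (RCLike.ofReal ∘ f) := by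
      rw [diagonal_conjTranspose]
      have : (star (RCLike.ofReal ∘ f : Fin d → ℂ)) = RCLike.ofReal ∘ f := by
        funext i; simp [Pi.star_apply, RCLike.star_def, RCLike.conj_ofReal]
      rw [this]
    rw [Matrix.star_eq_conjTranspose U]
    rw [conjTranspose_mul, conjTranspose_mul, conjTranspose_conjTranspose, hd, mul_assoc]
  have hpsd : ∀ f, (∀ i, 0 ≤ f i) → (cnj f).PosSemidef := by
    intro f hf
    have hd : (diagonal (RCLike.ofReal ∘ f) : Matrix (Fin d) (Fin d) ℂ).PosSemidef :=
      posSemidef_diagonal_iff.mpr fun i => by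
        simpa using Complex.zero_le_real.mpr (hf i)
    have h := hd.mul_mul_conjTranspose_same U
    rw [← Matrix.star_eq_conjTranspose U] at h
    exact h
  have hspec : SA - SB = cnj e := hs.spectral_theorem
  -- positive/negative parts and the sign unitary
  set ep : Fin d → ℝ := fun i => max (e i) 0 with hep
  set em : Fin d → ℝ := fun i => max (-(e i)) 0 with hem
  set sg : Fin d → ℝ := fun i => if e i < 0 then -1 else 1 with hsg
  set V := cnj sg with hV
  have hVherm : Vᴴ = V := hherm sg
  have hone : cnj (fun _ => (1:ℝ)) = 1 := by
    simp only [hcnj]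
    have : (diagonal (RCLike.ofReal ∘ fun _ : Fin d => (1:ℝ)) : Matrix (Fin d) (Fin d) ℂ) = 1 := by
      ext i j
      by_cases h : i = j <;> simp [h, Function.comp, diagonal_apply, one_apply]
    rw [this, mul_one, hU2]
  have hV1 : Vᴴ * V = 1 := by
    rw [hVherm, hV, hcnj_mul]
    have : (fun i => sg i * sg i) = fun _ => (1:ℝ) := by
      funext i
      simp only [hsg]
      by_cases h : e i < 0 <;> simp [h]
    rw [this, hone]
  -- duality bound
  have hdual : (((A - B) * V).trace).re ≤ traceNorm (A - B) := by
    rw [trace_mul_comm]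
    exact trace_unitary_mul_le _ _ hV1
  -- algebraic identity A - B = SA(SA-SB) + (SA-SB)SB
  have hid : A - B = SA * (SA - SB) + (SA - SB) * SB := by
    rw [mul_sub, sub_mul, hA.sqrt_mul_self, hB.sqrt_mul_self, sub_add_sub_cancel]
  have habs : ∀ i, e i * sg i = |e i| := by
    intro i
    simp only [hsg]
    by_cases h : e i < 0
    · simp [h, abs_of_neg h]
    · simp [h, abs_of_nonneg (le_of_not_gt h)]
  have hsv : (SA - SB) * V = cnj (fun i => |e i|) := by
    rw [hspec, hV, hcnj_mul]
    exact congrArg cnj (funext habs)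
  have hvs : V * (SA - SB) = cnj (fun i => |e i|) := by
    rw [hspec, hV, hcnj_mul]
    exact congrArg cnj (funext fun i => by rw [mul_comm]; exact habs i)
  -- split |e| = ep + em
  have habs_split : (fun i => |e i|) = fun i => ep i + em i := by
    funext i
    simp only [hep, hem]
    rcases le_total 0 (e i) with h | h
    · simp [abs_of_nonneg h, max_eq_left h, max_eq_right (neg_nonpos_of_nonneg h)]
    · simp [abs_of_nonpos h, max_eq_right h, max_eq_left (neg_nonneg_of_nonpos h)]
  have hcnj_add : ∀ f g, cnj (fun i => f i + g i) = cnj f + cnj g := by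
    intro f g
    simp only [hcnj]
    have : (RCLike.ofReal ∘ (fun i => f i + g i) : Fin d → ℂ)
        = fun i => (RCLike.ofReal ∘ f) i + (RCLike.ofReal ∘ g) i := by
      funext i; simp
    rw [this, ← diagonal_add, mul_add, add_mul]
  -- trace computation
  have hmain : (((A - B) * V).trace).re
      = ((SA * cnj (fun i => |e i|)).trace).re + ((SB * cnj (fun i => |e i|)).trace).re := by
    have h1 : (A - B) * V = SA * ((SA - SB) * V) + (SA - SB) * (SB * V) := by
      rw [hid, add_mul, mul_assoc, mul_assoc]
    have h2 : ((SA - SB) * (SB * V)).trace = ((SB * (V * (SA - SB)))).trace := by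
      rw [trace_mul_comm (SA - SB) (SB * V), mul_assoc]
    rw [h1, trace_add, h2, hsv, hvs, Complex.add_re]
  -- nonnegativity facts
  have hepnn : ∀ i, 0 ≤ ep i := fun i => le_max_right _ _
  have hemnn : ∀ i, 0 ≤ em i := fun i => le_max_right _ _
  have hApnn : 0 ≤ ((SA * cnj ep).trace).re :=
    trace_mul_re_nonneg hA.posSemidef_sqrt (hpsd ep hepnn)
  have hAmnn : 0 ≤ ((SA * cnj em).trace).re :=
    trace_mul_re_nonneg hA.posSemidef_sqrt (hpsd em hemnn)
  have hBpnn : 0 ≤ ((SB * cnj ep).trace).re :=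
    trace_mul_re_nonneg hB.posSemidef_sqrt (hpsd ep hepnn)
  have hBmnn : 0 ≤ ((SB * cnj em).trace).re :=
    trace_mul_re_nonneg hB.posSemidef_sqrt (hpsd em hemnn)
  -- splitting the two traces
  have hsplitA : ((SA * cnj (fun i => |e i|)).trace).re
      = ((SA * cnj ep).trace).re + ((SA * cnj em).trace).re := by
    rw [habs_split, hcnj_add, mul_add, trace_add, Complex.add_re]
  have hsplitB : ((SB * cnj (fun i => |e i|)).trace).re
      = ((SB * cnj ep).trace).re + ((SB * cnj em).trace).re := by
    rw [habs_split, hcnj_add, mul_add, trace_add, Complex.add_re]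
  -- key differences
  have hdiffp : ((SA * cnj ep).trace).re - ((SB * cnj ep).trace).re = ∑ i, ep i ^ 2 := by
    have h1 : (SA * cnj ep) - (SB * cnj ep) = cnj e * cnj ep := by
      rw [← sub_mul, hspec]
    have h2 : cnj e * cnj ep = cnj (fun i => e i * ep i) := hcnj_mul _ _
    have h3 : ((cnj (fun i => e i * ep i)).trace).re = ∑ i, e i * ep i := htr_re _
    have h4 : ∀ i, e i * ep i = ep i ^ 2 := by
      intro i
      simp only [hep]
      rcases le_total 0 (e i) with h | h
      · rw [max_eq_left h]; ring
      · rw [max_eq_right h]; ring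
    have h5 : ((SA * cnj ep - SB * cnj ep).trace).re = ∑ i, ep i ^ 2 := by
      rw [h1, h2, h3]
      exact Finset.sum_congr rfl fun i _ => h4 i
    rw [← h5, trace_sub, Complex.sub_re]
  have hdiffm : ((SB * cnj em).trace).re - ((SA * cnj em).trace).re = ∑ i, em i ^ 2 := by
    have h1 : (SA * cnj em) - (SB * cnj em) = cnj e * cnj em := by
      rw [← sub_mul, hspec]
    have h4 : ∀ i, e i * em i = -(em i ^ 2) := by
      intro i
      simp only [hem]
      rcases le_total 0 (e i) with h | h
      · rw [max_eq_right (neg_nonpos_of_nonneg h)]; ring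
      · rw [max_eq_left (neg_nonneg_of_nonpos h)]; ring
    have h5 : ((SA * cnj em - SB * cnj em).trace).re = -∑ i, em i ^ 2 := by
      rw [h1, hcnj_mul, htr_re]
      rw [← Finset.sum_neg_distrib]
      exact Finset.sum_congr rfl fun i _ => h4 i
    rw [trace_sub, Complex.sub_re] at h5
    linarith
  -- frob squared
  have hfrobsq : frob (SA - SB) ^ 2 = ∑ i, e i ^ 2 := by
    rw [frob_sq, hs.eq, hspec, hcnj_mul, htr_re]
    exact Finset.sum_congr rfl fun i _ => (sq (e i)).symm
  have hsumsq : ∑ i, e i ^ 2 = ∑ i, ep i ^ 2 + ∑ i, em i ^ 2 := by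
    rw [← Finset.sum_add_distrib]
    refine Finset.sum_congr rfl fun i _ => ?_
    simp only [hep, hem]
    rcases le_total 0 (e i) with h | h
    · rw [max_eq_left h, max_eq_right (neg_nonpos_of_nonneg h)]; ring
    · rw [max_eq_right h, max_eq_left (neg_nonneg_of_nonpos h)]; ring
  rw [hfrobsq, hsumsq]
  have := hdual
  rw [hmain, hsplitA, hsplitB] at this
  linarith

end FidelityAux

/-- If `ρ, ρ̂, κ` are density matrices with `Tr|ρ̂ - ρ| ≤ 2δ`, then
`|F(ρ̂,κ) - F(ρ,κ)| ≤ √(2δ)`, i.e. `F(ρ̂,κ) - √(2δ) ≤ F(ρ,κ) ≤ F(ρ̂,κ) + √(2δ)`. -/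
theorem fidelity_perturbation (d : ℕ) (δ : ℝ)
    (ρ ρhat κ : Matrix (Fin d) (Fin d) ℂ)
    (hρ : ρ.PosSemidef) (hρtr : ρ.trace = 1)
    (hρhat : ρhat.PosSemidef) (hρhattr : ρhat.trace = 1)
    (hκ : κ.PosSemidef) (hκtr : κ.trace = 1)
    (hdist : traceNorm (ρhat - ρ) ≤ 2 * δ) :
    |fid hρhat hκ - fid hρ hκ| ≤ Real.sqrt (2 * δ) ∧
    (fid hρhat hκ - Real.sqrt (2 * δ) ≤ fid hρ hκ ∧
      fid hρ hκ ≤ fid hρhat hκ + Real.sqrt (2 * δ)) := by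
  have key : |fid hρhat hκ - fid hρ hκ| ≤ Real.sqrt (2 * δ) := by
    have h1 := FidelityAux.fid_sub_le hρhat hρ hκ hκtr
    have h2 := FidelityAux.fid_sub_le hρ hρhat hκ hκtr
    have hfr : FidelityAux.frob (hρ.sqrt - hρhat.sqrt) = FidelityAux.frob (hρhat.sqrt - hρ.sqrt) :=
      FidelityAux.frob_sub_comm _ _
    have hps := FidelityAux.powers_stormer hρhat hρ
    have hle : FidelityAux.frob (hρhat.sqrt - hρ.sqrt) ≤ Real.sqrt (2 * δ) := by
      have h0 := FidelityAux.frob_nonneg (hρhat.sqrt - hρ.sqrt)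
      have : FidelityAux.frob (hρhat.sqrt - hρ.sqrt) ^ 2 ≤ 2 * δ := le_trans hps hdist
      have hδ : (0:ℝ) ≤ 2 * δ := le_trans (sq_nonneg _) this
      exact (Real.le_sqrt h0 hδ).mpr this
    rw [abs_sub_le_iff]
    constructor
    · exact le_trans h1 hle
    · exact le_trans (hfr ▸ h2) hle
  obtain ⟨hl, hr⟩ := abs_le.mp key
  exact ⟨key, by linarith, by linarith⟩
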